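/- arXiv:1808.01548 — 2 statements merged into one kernel-verified Lean document; each statement's English description precedes it below -/
import Mathlib

section
/- Fix t ≡ 169 (mod 1260) with t ≥ 1429. For 1 ≤ i ≤ (5t−8)/3, the triples of cycle lengths {22t+i, 25t+(t−1)/3+i−1, 28t+(2t−2)/3+2i−2} (from subgraphs B_{22t+i}) and {23t+(2t−2)/3+i, 27t+i−1, 28t+(2t−2)/3+2i−1} (from subgraphs B_{23t+(2t−2)/3+i}) together give 2·(5t−8)/3 triples whose union consists of pairwise distinct integers. -/
/-- The six cycle lengths of the theta subgraphs `B_{22t+i}` and `B_{23t+(2t-2)/3+i}`. -/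
def theta6 (t i : ℤ) : Fin 6 → ℤ :=
  ![22*t+i, 25*t+(t-1)/3+i-1, 28*t+(2*t-2)/3+2*i-2,
    23*t+(2*t-2)/3+i, 27*t+i-1, 28*t+(2*t-2)/3+2*i-1]

lemma cons_val_five {α : Type*} {m : ℕ} (x : α) (u : Fin (m+5) → α) :
    Matrix.vecCons x u 5 =
      Matrix.vecHead (Matrix.vecTail (Matrix.vecTail (Matrix.vecTail (Matrix.vecTail u)))) :=
  rfl

theorem stmt10 (t : ℤ) (hmod : t % 1260 = 169) (ht : 1429 ≤ t) :
    ∀ i i', 1 ≤ i → i ≤ (5*t-8)/3 → 1 ≤ i' → i' ≤ (5*t-8)/3 →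
      ∀ a b : Fin 6, theta6 t i a = theta6 t i' b → i = i' ∧ a = b := by
  intro i i' hi1 hi2 hi1' hi2' a b heq
  fin_cases a <;> fin_cases b <;> simp [theta6, cons_val_five] at heq ⊢ <;>
    omega
end

section
/- Let s₁ > s₂ and s₁ + 3s₂ > k be positive integers, m even, t ≥ 1. Then the cycle lengths from the theta subgraphs, m(s₁t + i), m(s₁t + s₂t + i), m(s₁t + 2s₂t + i) for 1 ≤ i ≤ s₂t, the lengths m·i for the simple cycles B_i with 1 ≤ i ≤ s₁t (together with i in the range covered), and the lengths m·s₁t + 3m·s₂t + m·k·h·t + (h+j−1)m·t + m·i for 1 ≤ i ≤ t, j ≥ 1, h ≥ 0, j + h ≤ k + 1, are all pairwise distinct. -/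
/-- All cycle lengths of the graph constructed in the proof of Theorem 5, indexed by
the subgraph they come from: theta subgraphs (three lengths each), simple cycles,
and the cycles of `B_{s₁t+s₂t+i}` (indexed by pairs `(j,h)` with `j ≥ 1`,
`j + h ≤ k + 1`). -/
def thm5Lengths (m t k s₁ s₂ : ℕ) :
    (({i : ℕ // 1 ≤ i ∧ i ≤ s₂ * t} × Fin 3) ⊕
     {i : ℕ // 1 ≤ i ∧ i ≤ s₁ * t} ⊕
     ({i : ℕ // 1 ≤ i ∧ i ≤ t} × {jh : ℕ × ℕ // 1 ≤ jh.1 ∧ jh.1 + jh.2 ≤ k + 1})) → ℕ :=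
  Sum.elim
    (fun p => ![m * (s₁ * t + p.1.val), m * (s₁ * t + s₂ * t + p.1.val),
                m * (s₁ * t + 2 * s₂ * t + p.1.val)] p.2)
    (Sum.elim
      (fun i => m * i.val)
      (fun p => m * s₁ * t + 3 * m * s₂ * t + m * k * p.2.val.2 * t +
        (p.2.val.2 + p.2.val.1 - 1) * m * t + m * p.1.val))

/-- Uniqueness of quotient and remainder. -/
lemma key_qr {t q₁ q₂ i₁ i₂ : ℕ} (h1 : i₁ < t) (h2 : i₂ < t)
    (h : q₁ * t + i₁ = q₂ * t + i₂) : q₁ = q₂ ∧ i₁ = i₂ := by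
  have e : (q₁ * t + i₁) % t = (q₂ * t + i₂) % t := by rw [h]
  rw [mul_comm q₁ t, mul_comm q₂ t, Nat.mul_add_mod, Nat.mul_add_mod,
    Nat.mod_eq_of_lt h1, Nat.mod_eq_of_lt h2] at e
  subst e
  have : q₁ * t = q₂ * t := by omega
  exact ⟨Nat.eq_of_mul_eq_mul_right (by omega) this, rfl⟩

/-- The cycle lengths with the common factor `m` removed. -/
def thm5N (t k s₁ s₂ : ℕ) :
    (({i : ℕ // 1 ≤ i ∧ i ≤ s₂ * t} × Fin 3) ⊕
     {i : ℕ // 1 ≤ i ∧ i ≤ s₁ * t} ⊕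
     ({i : ℕ // 1 ≤ i ∧ i ≤ t} × {jh : ℕ × ℕ // 1 ≤ jh.1 ∧ jh.1 + jh.2 ≤ k + 1})) → ℕ :=
  Sum.elim
    (fun p => s₁ * t + p.2.val * (s₂ * t) + p.1.val)
    (Sum.elim
      (fun i => i.val)
      (fun p => s₁ * t + 3 * (s₂ * t) +
        (p.2.val.2 * (k + 1) + (p.2.val.1 - 1)) * t + p.1.val))

lemma thm5_factor (m t k s₁ s₂ : ℕ) (x) :
    thm5Lengths m t k s₁ s₂ x = m * thm5N t k s₁ s₂ x := by
  rcases x with ⟨⟨i, hi⟩, r⟩ | ⟨i, hi⟩ | ⟨⟨i, hi⟩, ⟨⟨j, h⟩, hjh⟩⟩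
  · fin_cases r
    · show m * (s₁ * t + i) = m * (s₁ * t + 0 * (s₂ * t) + i); ring
    · show m * (s₁ * t + s₂ * t + i) = m * (s₁ * t + 1 * (s₂ * t) + i); ring
    · show m * (s₁ * t + 2 * s₂ * t + i) = m * (s₁ * t + 2 * (s₂ * t) + i); ring
  · rfl
  · obtain ⟨j', rfl⟩ : ∃ j', j = j' + 1 := ⟨j - 1, by omega⟩
    simp only [thm5Lengths, thm5N, Sum.elim_inr]
    have e : h + (j' + 1) - 1 = h + j' := by omega
    have e' : (j' + 1, h).1 - 1 = j' := by omega
    rw [e, e']; ring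

theorem stmt15 (m t k s₁ s₂ : ℕ) (hm : Even m) (hmpos : 0 < m)
    (hs₂ : 0 < s₂) (hs : s₂ < s₁) (hkpos : 0 < k) (hk : k < s₁ + 3 * s₂) (ht : 1 ≤ t) :
    Function.Injective (thm5Lengths m t k s₁ s₂) := by
  intro x y hxy
  have hxy' : thm5N t k s₁ s₂ x = thm5N t k s₁ s₂ y :=
    Nat.eq_of_mul_eq_mul_left hmpos (by rw [← thm5_factor, ← thm5_factor, hxy])
  clear hxy
  rcases x with ⟨⟨i₁, hi₁⟩, r₁⟩ | ⟨i₁, hi₁⟩ | ⟨⟨i₁, hi₁⟩, ⟨⟨j₁, h₁⟩, hjh₁⟩⟩ <;>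
    rcases y with ⟨⟨i₂, hi₂⟩, r₂⟩ | ⟨i₂, hi₂⟩ | ⟨⟨i₂, hi₂⟩, ⟨⟨j₂, h₂⟩, hjh₂⟩⟩ <;>
    simp only [thm5N, Sum.elim_inl, Sum.elim_inr] at hxy'
  -- A vs A
  · obtain ⟨hr, hi⟩ := key_qr (t := s₂ * t)
      (q₁ := (r₁ : ℕ)) (q₂ := (r₂ : ℕ)) (i₁ := i₁ - 1) (i₂ := i₂ - 1)
      (by omega) (by omega) (by omega)
    simp only [Sum.inl.injEq, Prod.mk.injEq, Subtype.mk.injEq]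
    exact ⟨by omega, Fin.ext hr⟩
  -- A vs B
  · exfalso; omega
  -- A vs C
  · exfalso
    have hr : (r₁ : ℕ) ≤ 2 := by omega
    have := Nat.mul_le_mul_right (s₂ * t) hr
    omega
  -- B vs A
  · exfalso; omega
  -- B vs B
  · simp only [Sum.inr.injEq, Sum.inl.injEq, Subtype.mk.injEq]
    omega
  -- B vs C
  · exfalso; omega
  -- C vs A
  · exfalso
    have hr : (r₂ : ℕ) ≤ 2 := by omega
    have := Nat.mul_le_mul_right (s₂ * t) hr
    omega
  -- C vs B
  · exfalso; omega
  -- C vs C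
  · obtain ⟨hn, hi⟩ := key_qr (t := t)
      (q₁ := h₁ * (k + 1) + (j₁ - 1)) (q₂ := h₂ * (k + 1) + (j₂ - 1))
      (i₁ := i₁ - 1) (i₂ := i₂ - 1) (by omega) (by omega) (by omega)
    obtain ⟨hh, hj⟩ := key_qr (t := k + 1) (q₁ := h₁) (q₂ := h₂)
      (i₁ := j₁ - 1) (i₂ := j₂ - 1) (by omega) (by omega) hn
    simp only [Sum.inr.injEq, Prod.mk.injEq, Subtype.mk.injEq]
    omega
end
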